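/- Let R be a commutative ring, I an ideal of R, n ≥ 3, and suppose SR_{n−1}(I) holds. Then every g ∈ SL(n,R) with g ≡ 1ₙ (mod I) can be written as g = a · z · b · h where: a is a product of at most 2(n−1) elementary transvections t_{ij}(s) with parameters s ∈ I; z = t_{1n}(1)⁻¹ · t_{n1}(r) · t_{1n}(1) for some r ∈ I; b is a product of at most 2(n−1) − 1 elementary transvections t_{ij}(s) with parameters s ∈ I; and h ≡ 1ₙ (mod I) has first row and first column equal to those of the identity matrix. In particular g is a product of at most 4(n−1) − 1 elementary transvections with parameter in I, one element of the form t_{1n}(1)⁻¹ t_{n1}(r) t_{1n}(1) with r ∈ I, and one element of the embedded principal congruence subgroup SL(n−1,R,I). (Corollary on the length of the Bass–Kolster decomposition, case Φ = A_{n−1}.) -/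

import Mathlib

set_option maxHeartbeats 1000000


open Matrix

/-- A row `a` is `I`-unimodular. -/
def IsIUnimodular {R : Type*} [CommRing R] (I : Ideal R) {n : ℕ} (a : Fin n → R) : Prop :=
  (∀ i : Fin n, (i : ℕ) = 0 → a i - 1 ∈ I) ∧ (∀ i : Fin n, (i : ℕ) ≠ 0 → a i ∈ I) ∧
    Ideal.span (Set.range a) = ⊤

/-- The relative stable range condition `SRₙ(I)`. -/
def SRCond {R : Type*} [CommRing R] (n : ℕ) (I : Ideal R) : Prop :=
  ∀ a : Fin (n + 1) → R, IsIUnimodular I a →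
    ∃ b : Fin n → R, (∀ i, b i ∈ I) ∧
      IsIUnimodular I (fun i : Fin n => a i.castSucc + a (Fin.last n) * b i)

/-- The elementary transvection `t_{ij}(ξ) = 1 + ξE_{ij}` as an element of `SL(n,R)`. -/
def tSL {R : Type*} [CommRing R] {n : ℕ} (i j : Fin n) (hij : i ≠ j) (ξ : R) :
    Matrix.SpecialLinearGroup (Fin n) R :=
  ⟨Matrix.transvection i j ξ, Matrix.det_transvection_of_ne i j hij ξ⟩

/-- `g ≡ 1 (mod I)`, entrywise. -/
def ModI {R : Type*} [CommRing R] (I : Ideal R) {n : ℕ} (g : Matrix (Fin n) (Fin n) R) : Prop :=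
  ∀ i j, g i j - (1 : Matrix (Fin n) (Fin n) R) i j ∈ I

/-- `x` is an elementary transvection with parameter in `I`. -/
def IsElemTransvectionI {R : Type*} [CommRing R] (I : Ideal R) {n : ℕ}
    (x : Matrix.SpecialLinearGroup (Fin n) R) : Prop :=
  ∃ i j, ∃ hij : i ≠ j, ∃ s ∈ I, x = tSL i j hij s

namespace BKaux

variable {R : Type*} [CommRing R] {n : ℕ}

/-- `Ecol q φ` has `k`-th column equal to `φ` if `k = q` and zero otherwise. -/
def Ecol (q : Fin n) (φ : Fin n → R) : Matrix (Fin n) (Fin n) R :=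
  Matrix.of fun i j => if j = q then φ i else 0

/-- `Erow p φ` has `i`-th row equal to `φ` if `i = p` and zero otherwise. -/
def Erow (p : Fin n) (φ : Fin n → R) : Matrix (Fin n) (Fin n) R :=
  Matrix.of fun i j => if i = p then φ j else 0

lemma Ecol_mul_apply (q : Fin n) (φ : Fin n → R) (M : Matrix (Fin n) (Fin n) R) (i k : Fin n) :
    ((1 + Ecol q φ) * M) i k = M i k + φ i * M q k := by
  rw [add_mul, one_mul, Matrix.add_apply, Matrix.mul_apply]
  congr 1
  simp [Ecol, ite_mul, Finset.sum_ite_eq, Finset.sum_ite_eq']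

lemma Erow_mul_apply (p : Fin n) (φ : Fin n → R) (M : Matrix (Fin n) (Fin n) R) (i k : Fin n) :
    ((1 + Erow p φ) * M) i k = M i k + (if i = p then ∑ j, φ j * M j k else 0) := by
  rw [add_mul, one_mul, Matrix.add_apply, Matrix.mul_apply]
  congr 1
  by_cases hi : i = p <;> simp [Erow, hi]

lemma Ecol_mul_Ecol (q : Fin n) (φ φ' : Fin n → R) (hφ' : φ' q = 0) :
    Ecol q φ * Ecol q φ' = 0 := by
  ext i k
  rw [Matrix.mul_apply]
  apply Finset.sum_eq_zero
  intro m _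
  by_cases hm : m = q <;> by_cases hk : k = q <;> simp [Ecol, hm, hk, hφ']

lemma Erow_mul_Erow (p : Fin n) (φ φ' : Fin n → R) (hφ : φ p = 0) :
    Erow p φ * Erow p φ' = 0 := by
  ext i k
  rw [Matrix.mul_apply]
  apply Finset.sum_eq_zero
  intro m _
  by_cases hm : m = p <;> by_cases hi : i = p <;> simp [Erow, hm, hi, hφ]

lemma one_add_Ecol_mul (q : Fin n) (φ : Fin n → R) (hφ : φ q = 0) :
    (1 + Ecol q φ) * (1 + Ecol q (-φ)) = 1 := by
  have h1 : Ecol q φ + Ecol q (-φ) = 0 := by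
    ext i k; by_cases hk : k = q <;> simp [Ecol, hk]
  have h2 : Ecol q φ * Ecol q (-φ) = 0 :=
    Ecol_mul_Ecol q φ (-φ) (by simp [hφ])
  have h3 : (1 + Ecol q φ) * (1 + Ecol q (-φ))
      = 1 + (Ecol q φ + Ecol q (-φ)) + Ecol q φ * Ecol q (-φ) := by noncomm_ring
  rw [h3, h1, h2, add_zero, add_zero]

lemma one_add_Erow_mul (p : Fin n) (φ : Fin n → R) (hφ : φ p = 0) :
    (1 + Erow p φ) * (1 + Erow p (-φ)) = 1 := by
  have h1 : Erow p φ + Erow p (-φ) = 0 := by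
    ext i k; by_cases hi : i = p <;> simp [Erow, hi]
  have h2 : Erow p φ * Erow p (-φ) = 0 := Erow_mul_Erow p φ (-φ) hφ
  have h3 : (1 + Erow p φ) * (1 + Erow p (-φ))
      = 1 + (Erow p φ + Erow p (-φ)) + Erow p φ * Erow p (-φ) := by noncomm_ring
  rw [h3, h1, h2, add_zero, add_zero]

lemma tSL_mul (i j : Fin n) (h : i ≠ j) (c d : R) :
    tSL i j h c * tSL i j h d = tSL i j h (c + d) := by
  apply Subtype.ext
  rw [Matrix.SpecialLinearGroup.coe_mul]
  exact Matrix.transvection_mul_transvection_same i j h c d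

lemma tSL_zero (i j : Fin n) (h : i ≠ j) : tSL i j h (0 : R) = 1 := by
  apply Subtype.ext
  simp [tSL]

lemma tSL_inv (i j : Fin n) (h : i ≠ j) (c : R) :
    (tSL i j h c)⁻¹ = tSL i j h (-c) := by
  apply inv_eq_of_mul_eq_one_right
  rw [tSL_mul]
  simp [tSL_zero]

def colList (q : Fin n) (f : Fin n → R) :
    List (Fin n) → List (Matrix.SpecialLinearGroup (Fin n) R)
  | [] => []
  | j :: l => if h : j ≠ q then tSL j q h (f j) :: colList q f l else colList q f l

def rowList (p : Fin n) (f : Fin n → R) :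
    List (Fin n) → List (Matrix.SpecialLinearGroup (Fin n) R)
  | [] => []
  | j :: l => if h : p ≠ j then tSL p j h (f j) :: rowList p f l else rowList p f l

lemma colList_length (q : Fin n) (f : Fin n → R) :
    ∀ l : List (Fin n), (colList q f l).length ≤ l.length := by
  intro l
  induction l with
  | nil => simp [colList]
  | cons j l ih =>
    rw [colList]
    split
    · simpa using ih
    · simp; omega

lemma rowList_length (p : Fin n) (f : Fin n → R) :
    ∀ l : List (Fin n), (rowList p f l).length ≤ l.length := by
  intro l
  induction l with
  | nil => simp [rowList]
  | cons j l ih =>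
    rw [rowList]
    split
    · simpa using ih
    · simp; omega

lemma colList_mem (I : Ideal R) (q : Fin n) (f : Fin n → R) :
    ∀ l : List (Fin n), (∀ j ∈ l, f j ∈ I) →
      ∀ x ∈ colList q f l, IsElemTransvectionI I x := by
  intro l
  induction l with
  | nil => simp [colList]
  | cons j l ih =>
    intro hf x hx
    rw [colList] at hx
    split at hx
    · rcases List.mem_cons.1 hx with h | h
      · exact ⟨j, q, ‹j ≠ q›, f j, hf j (List.mem_cons_self), h⟩
      · exact ih (fun j hj => hf j (List.mem_cons_of_mem _ hj)) x h
    · exact ih (fun j hj => hf j (List.mem_cons_of_mem _ hj)) x hx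

lemma rowList_mem (I : Ideal R) (p : Fin n) (f : Fin n → R) :
    ∀ l : List (Fin n), (∀ j ∈ l, f j ∈ I) →
      ∀ x ∈ rowList p f l, IsElemTransvectionI I x := by
  intro l
  induction l with
  | nil => simp [rowList]
  | cons j l ih =>
    intro hf x hx
    rw [rowList] at hx
    split at hx
    · rcases List.mem_cons.1 hx with h | h
      · exact ⟨p, j, ‹p ≠ j›, f j, hf j (List.mem_cons_self), h⟩
      · exact ih (fun j hj => hf j (List.mem_cons_of_mem _ hj)) x h
    · exact ih (fun j hj => hf j (List.mem_cons_of_mem _ hj)) x hx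

lemma colList_prod (q : Fin n) (f : Fin n → R) :
    ∀ l : List (Fin n), l.Nodup → (∀ j ∈ l, j ≠ q) →
      ((colList q f l).prod : Matrix (Fin n) (Fin n) R)
        = 1 + Ecol q (fun i => if i ∈ l then f i else 0) := by
  intro l
  induction l with
  | nil =>
    intro _ _
    ext i k
    simp [colList, Ecol, Matrix.one_apply]
  | cons j l ih =>
    intro hnd hq
    have hjq : j ≠ q := hq j (List.mem_cons_self)
    have hjl : j ∉ l := (List.nodup_cons.1 hnd).1
    have hq' : ∀ m ∈ l, m ≠ q := fun m hm => hq m (List.mem_cons_of_mem _ hm)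
    rw [colList, dif_pos hjq, List.prod_cons, Matrix.SpecialLinearGroup.coe_mul,
      ih (List.nodup_cons.1 hnd).2 hq']
    have hcoe : ((tSL j q hjq (f j) : Matrix.SpecialLinearGroup (Fin n) R) :
        Matrix (Fin n) (Fin n) R) = 1 + Matrix.single j q (f j) := rfl
    rw [hcoe]
    set E := Ecol q (fun i => if i ∈ l then f i else 0) with hE
    have hSE : Matrix.single j q (f j) * E = 0 := by
      ext i k
      rw [Matrix.mul_apply]
      apply Finset.sum_eq_zero
      intro m _
      by_cases hm : m ∈ l
      · have hmq : ¬ (q = m) := fun e => hq' m hm e.symm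
        simp [hE, Matrix.single, Ecol, hmq]
      · simp [hE, Ecol, hm]
    have hadd : Matrix.single j q (f j) + E
        = Ecol q (fun i => if i ∈ j :: l then f i else 0) := by
      ext i k
      by_cases hk : k = q
      · by_cases hij : i = j
        · simp [hE, Matrix.single, Ecol, hk, hij, hjl]
        · have h2 : ¬ (j = i) := fun e => hij e.symm
          simp [hE, Matrix.single, Ecol, hk, hij, h2]
      · have h2 : ¬ (q = k) := fun e => hk e.symm
        simp [hE, Matrix.single, Ecol, hk, h2]
    have expand : (1 + Matrix.single j q (f j)) * (1 + E)
        = 1 + (Matrix.single j q (f j) + E) + Matrix.single j q (f j) * E := by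
      noncomm_ring
    rw [expand, hSE, add_zero, hadd]

lemma rowList_prod (p : Fin n) (f : Fin n → R) :
    ∀ l : List (Fin n), l.Nodup → (∀ j ∈ l, j ≠ p) →
      ((rowList p f l).prod : Matrix (Fin n) (Fin n) R)
        = 1 + Erow p (fun k => if k ∈ l then f k else 0) := by
  intro l
  induction l with
  | nil =>
    intro _ _
    ext i k
    simp [rowList, Erow, Matrix.one_apply]
  | cons j l ih =>
    intro hnd hq
    have hjp : j ≠ p := hq j (List.mem_cons_self)
    have hpj : p ≠ j := hjp.symm
    have hjl : j ∉ l := (List.nodup_cons.1 hnd).1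
    have hq' : ∀ m ∈ l, m ≠ p := fun m hm => hq m (List.mem_cons_of_mem _ hm)
    rw [rowList, dif_pos hpj, List.prod_cons, Matrix.SpecialLinearGroup.coe_mul,
      ih (List.nodup_cons.1 hnd).2 hq']
    have hcoe : ((tSL p j hpj (f j) : Matrix.SpecialLinearGroup (Fin n) R) :
        Matrix (Fin n) (Fin n) R) = 1 + Matrix.single p j (f j) := rfl
    rw [hcoe]
    set E := Erow p (fun k => if k ∈ l then f k else 0) with hE
    have hSE : Matrix.single p j (f j) * E = 0 := by
      ext i k
      rw [Matrix.mul_apply]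
      apply Finset.sum_eq_zero
      intro m _
      by_cases hm : m = p
      · have h2 : ¬ (j = m) := fun e => hjp (e.trans hm)
        simp [hE, Matrix.single, Erow, hm, h2, hjp]
      · simp [hE, Erow, hm]
    have hadd : Matrix.single p j (f j) + E
        = Erow p (fun k => if k ∈ j :: l then f k else 0) := by
      ext i k
      by_cases hi : i = p
      · by_cases hkj : k = j
        · simp [hE, Matrix.single, Erow, hi, hkj, hjl]
        · have h2 : ¬ (j = k) := fun e => hkj e.symm
          simp [hE, Matrix.single, Erow, hi, hkj, h2]
      · have h2 : ¬ (p = i) := fun e => hi e.symm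
        simp [hE, Matrix.single, Erow, hi, h2]
    have expand : (1 + Matrix.single p j (f j)) * (1 + E)
        = 1 + (Matrix.single p j (f j) + E) + Matrix.single p j (f j) * E := by
      noncomm_ring
    rw [expand, hSE, add_zero, hadd]

lemma restrict_eq (l : List (Fin n)) (f : Fin n → R) (h0 : ∀ x, x ∉ l → f x = 0) :
    (fun i => if i ∈ l then f i else 0) = f := by
  funext x
  by_cases h : x ∈ l
  · simp [h]
  · simp [h, h0 x h]

/-- Extend a function on `Fin m` by zero to `Fin (m+1)`. -/
def ext0 {m : ℕ} (f : Fin m → R) : Fin (m + 1) → R :=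
  fun i => if h : (i : ℕ) < m then f ⟨i, h⟩ else 0

lemma ext0_castSucc {m : ℕ} (f : Fin m → R) (j : Fin m) : ext0 f j.castSucc = f j := by
  have hj : ((j.castSucc : Fin (m + 1)) : ℕ) < m := j.isLt
  rw [ext0, dif_pos hj]
  exact congrArg f (Fin.ext rfl)

lemma ext0_of_ge {m : ℕ} (f : Fin m → R) (i : Fin (m + 1)) (h : ¬ (i : ℕ) < m) :
    ext0 f i = 0 := dif_neg h

lemma ext0_mem {m : ℕ} (I : Ideal R) (f : Fin m → R) (hf : ∀ j, f j ∈ I) (i : Fin (m + 1)) :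
    ext0 f i ∈ I := by
  rw [ext0]
  split
  · exact hf _
  · exact I.zero_mem

end BKaux

section Lists

/-- castSucc images: indices `< m` inside `Fin (m+1)`. -/
def lmList (m : ℕ) : List (Fin (m + 1)) := (List.finRange m).map Fin.castSucc

/-- positive indices inside `Fin (m+1)`. -/
def lposList (m : ℕ) : List (Fin (m + 1)) := (List.finRange m).map Fin.succ

/-- indices strictly between `0` and `m` inside `Fin (m+1)`. -/
def lmidList (m : ℕ) : List (Fin (m + 1)) :=
  (List.finRange (m - 1)).map (fun i => ⟨i.1 + 1, by omega⟩)

lemma lmList_length (m : ℕ) : (lmList m).length = m := by simp [lmList]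

lemma lposList_length (m : ℕ) : (lposList m).length = m := by simp [lposList]

lemma lmidList_length (m : ℕ) : (lmidList m).length = m - 1 := by simp [lmidList]

lemma lmList_nodup (m : ℕ) : (lmList m).Nodup :=
  (List.nodup_finRange m).map (Fin.castSucc_injective m)

lemma lposList_nodup (m : ℕ) : (lposList m).Nodup :=
  (List.nodup_finRange m).map (Fin.succ_injective m)

lemma lmidList_nodup (m : ℕ) : (lmidList m).Nodup := by
  apply (List.nodup_finRange (m - 1)).map
  intro i j hij
  have : i.1 + 1 = j.1 + 1 := congrArg Fin.val hij
  exact Fin.ext (by omega)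

lemma lmList_mem (m : ℕ) (x : Fin (m + 1)) : x ∈ lmList m ↔ (x : ℕ) < m := by
  simp only [lmList, List.mem_map, List.mem_finRange, true_and]
  constructor
  · rintro ⟨i, rfl⟩; exact i.isLt
  · intro hx; exact ⟨⟨x, hx⟩, Fin.ext rfl⟩

lemma lposList_mem (m : ℕ) (x : Fin (m + 1)) : x ∈ lposList m ↔ (x : ℕ) ≠ 0 := by
  simp only [lposList, List.mem_map, List.mem_finRange, true_and]
  constructor
  · rintro ⟨i, rfl⟩; simp [Fin.val_succ]
  · intro hx
    refine ⟨⟨x.1 - 1, by omega⟩, Fin.ext ?_⟩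
    simp [Fin.val_succ]
    omega
  
lemma lmidList_mem (m : ℕ) (x : Fin (m + 1)) :
    x ∈ lmidList m ↔ ((x : ℕ) ≠ 0 ∧ (x : ℕ) ≠ m) := by
  simp only [lmidList, List.mem_map, List.mem_finRange, true_and]
  constructor
  · rintro ⟨i, rfl⟩
    have := i.isLt
    constructor <;> simp <;> omega
  · rintro ⟨h0, hm⟩
    have := x.isLt
    refine ⟨⟨x.1 - 1, by omega⟩, Fin.ext ?_⟩
    simp
    omega

end Lists

/-- Length count in the relative Bass–Kolster decomposition for `SL(n,R,I)`. -/
theorem bass_kolster_count {R : Type*} [CommRing R] (I : Ideal R) (n : ℕ) (hn : 3 ≤ n)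
    (hSR : SRCond (n - 1) I) (g : Matrix.SpecialLinearGroup (Fin n) R)
    (hg : ModI I (g : Matrix (Fin n) (Fin n) R)) :
    ∃ (La Lb : List (Matrix.SpecialLinearGroup (Fin n) R))
      (z h : Matrix.SpecialLinearGroup (Fin n) R) (r : R),
      r ∈ I ∧
      La.length ≤ 2 * (n - 1) ∧ (∀ x ∈ La, IsElemTransvectionI I x) ∧
      Lb.length ≤ 2 * (n - 1) - 1 ∧ (∀ x ∈ Lb, IsElemTransvectionI I x) ∧
      z = (tSL (⟨0, by omega⟩ : Fin n) ⟨n - 1, by omega⟩ (by simp; omega) 1)⁻¹ *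
            tSL (⟨n - 1, by omega⟩ : Fin n) ⟨0, by omega⟩ (by simp; omega) r *
            tSL (⟨0, by omega⟩ : Fin n) ⟨n - 1, by omega⟩ (by simp; omega) 1 ∧
      ModI I (h : Matrix (Fin n) (Fin n) R) ∧
      (∀ j : Fin n, (h : Matrix (Fin n) (Fin n) R) (⟨0, by omega⟩ : Fin n) j =
        (1 : Matrix (Fin n) (Fin n) R) (⟨0, by omega⟩ : Fin n) j) ∧
      (∀ i : Fin n, (h : Matrix (Fin n) (Fin n) R) i ⟨0, by omega⟩ =
        (1 : Matrix (Fin n) (Fin n) R) i ⟨0, by omega⟩) ∧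
      g = La.prod * z * Lb.prod * h := by
  obtain ⟨m, rfl⟩ : ∃ m, n = m + 1 := ⟨n - 1, by omega⟩
  have hm : 2 ≤ m := by omega
  set o : Fin (m + 1) := ⟨0, by omega⟩ with ho
  set L : Fin (m + 1) := ⟨m, by omega⟩ with hL
  have hoval : (o : ℕ) = 0 := by rw [ho]
  have hLval : (L : ℕ) = m := by rw [hL]
  have hoL : o ≠ L := by
    intro e; have := congrArg Fin.val e; rw [hoval, hLval] at this; omega
  have hLo : L ≠ o := hoL.symm
  set G : Matrix (Fin (m + 1)) (Fin (m + 1)) R :=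
    (g : Matrix (Fin (m + 1)) (Fin (m + 1)) R) with hGdef
  have hgI : ∀ i k, G i k - (1 : Matrix (Fin (m + 1)) (Fin (m + 1)) R) i k ∈ I := hg
  -- the first column of g
  set a : Fin (m + 1) → R := fun i => G i o with hadef
  have haI : ∀ i, i ≠ o → a i ∈ I := by
    intro i hio
    have h1 := hgI i o
    rw [Matrix.one_apply_ne hio, sub_zero] at h1
    rw [hadef]
    exact h1
  have hA : IsIUnimodular I a := by
    refine ⟨?_, ?_, ?_⟩
    · intro i hi
      have hio : i = o := Fin.ext (by omega)
      rw [hio, hadef]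
      have h1 := hgI o o
      rwa [Matrix.one_apply_eq] at h1
    · intro i hi
      exact haI i (fun e => hi (by rw [e, hoval]))
    · rw [Ideal.eq_top_iff_one]
      have hinv : ((g⁻¹ : Matrix.SpecialLinearGroup (Fin (m + 1)) R) :
          Matrix (Fin (m + 1)) (Fin (m + 1)) R) * G = 1 := by
        rw [hGdef, ← Matrix.SpecialLinearGroup.coe_mul, inv_mul_cancel,
          Matrix.SpecialLinearGroup.coe_one]
      have h1 : ∑ k, ((g⁻¹ : Matrix.SpecialLinearGroup (Fin (m + 1)) R) :
          Matrix (Fin (m + 1)) (Fin (m + 1)) R) o k * a k = 1 := by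
        have h2 := congrFun (congrFun hinv o) o
        rw [Matrix.mul_apply] at h2
        simp only [hadef]
        rw [h2, Matrix.one_apply_eq]
      rw [← h1]
      exact Ideal.sum_mem _ fun k _ => Ideal.mul_mem_left _ _ (Ideal.subset_span ⟨k, rfl⟩)
  -- apply the stable range condition
  obtain ⟨b, hb, hA'⟩ := hSR a hA
  set a' : Fin m → R := fun i => a i.castSucc + a (Fin.last m) * b i with ha'def
  have hA'2 : IsIUnimodular I a' := hA'
  have hLlast : L = Fin.last m := by rw [hL]; rfl
  set z0 : Fin m := ⟨0, by omega⟩ with hz0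
  have ha'0 : a' z0 - 1 ∈ I := hA'2.1 z0 (by rw [hz0])
  set δ : R := 1 - a' z0 with hδdef
  have hδ : δ ∈ I := by
    have : δ = -(a' z0 - 1) := by rw [hδdef]; ring
    rw [this]; exact I.neg_mem ha'0
  obtain ⟨c, hc⟩ : ∃ c : Fin m → R, ∑ i, c i * a' i = 1 := by
    have h1 : (1 : R) ∈ Ideal.span (Set.range a') := by rw [hA'2.2.2]; trivial
    have h1' : (1 : R) ∈ Submodule.span R (Set.range a') := h1
    obtain ⟨c, hc⟩ := (Submodule.mem_span_range_iff_exists_fun R).1 h1'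
    exact ⟨c, by simpa [smul_eq_mul] using hc⟩
  have haL : a L ∈ I := haI L hLo
  -- step 1 : clear the (i, 0) entries, i < m, to a' via column-type ops with pivot row L
  set φ1 : Fin (m + 1) → R := BKaux.ext0 (m := m) b with hφ1def
  have hφ1I : ∀ i, φ1 i ∈ I := by
    intro i; rw [hφ1def]; exact BKaux.ext0_mem I (m := m) b (fun j => hb j) i
  have hφ1L : φ1 L = 0 := by
    rw [hφ1def]; exact BKaux.ext0_of_ge (m := m) b L (by omega)
  have hφ1res : ∀ x : Fin (m + 1), x ∉ lmList m → φ1 x = 0 := by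
    intro x hx
    rw [hφ1def]
    exact BKaux.ext0_of_ge (m := m) b x (by rw [← lmList_mem m x]; exact hx)
  have hlmne : ∀ j ∈ lmList m, j ≠ L := by
    intro j hj
    rw [lmList_mem m j] at hj
    intro e; rw [e, hLval] at hj; omega
  set A1 : Matrix.SpecialLinearGroup (Fin (m + 1)) R := (BKaux.colList L φ1 (lmList m)).prod
    with hA1def
  have hA1coe : (A1 : Matrix (Fin (m + 1)) (Fin (m + 1)) R) = 1 + BKaux.Ecol L φ1 := by
    rw [hA1def, BKaux.colList_prod L φ1 (lmList m) (lmList_nodup m) hlmne,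
      BKaux.restrict_eq _ _ hφ1res]
  set G1 : Matrix (Fin (m + 1)) (Fin (m + 1)) R := (1 + BKaux.Ecol L φ1) * G with hG1def
  have hG1 : ∀ i k, G1 i k = G i k + φ1 i * G L k := by
    intro i k; rw [hG1def]; exact BKaux.Ecol_mul_apply L φ1 G i k
  have hG1c : ∀ j : Fin m, G1 j.castSucc o = a' j := by
    intro j
    rw [hG1 j.castSucc o, ha'def, hφ1def, BKaux.ext0_castSucc (m := m) b j, hadef, hLlast]
    ring
  have hG1L : G1 L o = a L := by
    rw [hG1 L o, hφ1L, hadef]; ring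
  have hG1I : ∀ i k, G1 i k - (1 : Matrix (Fin (m + 1)) (Fin (m + 1)) R) i k ∈ I := by
    intro i k
    have e : G1 i k - (1 : Matrix (Fin (m + 1)) (Fin (m + 1)) R) i k
        = (G i k - (1 : Matrix (Fin (m + 1)) (Fin (m + 1)) R) i k) + φ1 i * G L k := by
      rw [hG1 i k]; ring
    rw [e]
    exact I.add_mem (hgI i k) (I.mul_mem_right _ (hφ1I i))
  -- step 2 : make the (L, 0) entry equal to δ
  set φ2 : Fin (m + 1) → R := BKaux.ext0 (fun j => (δ - a L) * c j) with hφ2def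
  have hφ2I : ∀ i, φ2 i ∈ I := by
    intro i; rw [hφ2def]
    exact BKaux.ext0_mem I _ (fun j => I.mul_mem_right _ (I.sub_mem hδ haL)) i
  have hφ2L : φ2 L = 0 := by
    rw [hφ2def]; exact BKaux.ext0_of_ge _ L (by omega)
  have hφ2res : ∀ x : Fin (m + 1), x ∉ lmList m → φ2 x = 0 := by
    intro x hx
    rw [hφ2def]
    exact BKaux.ext0_of_ge _ x (by rw [← lmList_mem m x]; exact hx)
  set A2 : Matrix.SpecialLinearGroup (Fin (m + 1)) R := (BKaux.rowList L φ2 (lmList m)).prod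
    with hA2def
  have hA2coe : (A2 : Matrix (Fin (m + 1)) (Fin (m + 1)) R) = 1 + BKaux.Erow L φ2 := by
    rw [hA2def, BKaux.rowList_prod L φ2 (lmList m) (lmList_nodup m) hlmne,
      BKaux.restrict_eq _ _ hφ2res]
  set G2 : Matrix (Fin (m + 1)) (Fin (m + 1)) R := (1 + BKaux.Erow L φ2) * G1 with hG2def
  have hG2 : ∀ i k, G2 i k = G1 i k + (if i = L then ∑ j, φ2 j * G1 j k else 0) := by
    intro i k; rw [hG2def]; exact BKaux.Erow_mul_apply L φ2 G1 i k
  have hcsL : ∀ j : Fin m, j.castSucc ≠ L := by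
    intro j e
    have h1 : ((j.castSucc : Fin (m + 1)) : ℕ) = m := by rw [e, hLval]
    have h2 : ((j.castSucc : Fin (m + 1)) : ℕ) = (j : ℕ) := rfl
    have h3 := j.isLt
    omega
  have hG2c : ∀ j : Fin m, G2 j.castSucc o = a' j := by
    intro j
    rw [hG2 j.castSucc o, if_neg (hcsL j), add_zero, hG1c j]
  have hG2L : G2 L o = δ := by
    rw [hG2 L o, if_pos rfl, hG1L]
    have hsum : ∑ j, φ2 j * G1 j o = (δ - a L) * ∑ j, c j * a' j := by
      rw [Fin.sum_univ_castSucc]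
      have hlastL : Fin.last m = L := hLlast.symm
      rw [hlastL, hφ2L, zero_mul, add_zero, Finset.mul_sum]
      apply Finset.sum_congr rfl
      intro j _
      rw [hG1c j, hφ2def, BKaux.ext0_castSucc _ j]
      ring
    rw [hsum, hc]
    ring
  have hG2I : ∀ i k, G2 i k - (1 : Matrix (Fin (m + 1)) (Fin (m + 1)) R) i k ∈ I := by
    intro i k
    have e : G2 i k - (1 : Matrix (Fin (m + 1)) (Fin (m + 1)) R) i k
        = (G1 i k - (1 : Matrix (Fin (m + 1)) (Fin (m + 1)) R) i k)
          + (if i = L then ∑ j, φ2 j * G1 j k else 0) := by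
      rw [hG2 i k]; ring
    rw [e]
    refine I.add_mem (hG1I i k) ?_
    split
    · exact Ideal.sum_mem _ fun j _ => I.mul_mem_right _ (hφ2I j)
    · exact I.zero_mem
  -- the special element z and its inverse zi
  set z : Matrix.SpecialLinearGroup (Fin (m + 1)) R :=
    (tSL o L hoL 1)⁻¹ * tSL L o hLo δ * tSL o L hoL 1 with hzdef
  set zi : Matrix.SpecialLinearGroup (Fin (m + 1)) R :=
    tSL o L hoL (-1) * (tSL L o hLo (-δ) * tSL o L hoL 1) with hzidef
  have hziz : z⁻¹ = zi := by
    rw [hzdef, hzidef, _root_.mul_inv_rev, _root_.mul_inv_rev, inv_inv, BKaux.tSL_inv L o hLo δ,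
      BKaux.tSL_inv o L hoL 1]

  have hzicoe : (zi : Matrix (Fin (m + 1)) (Fin (m + 1)) R)
      = Matrix.transvection o L (-1)
        * (Matrix.transvection L o (-δ) * Matrix.transvection o L 1) := by
    rw [hzidef, Matrix.SpecialLinearGroup.coe_mul, Matrix.SpecialLinearGroup.coe_mul]
    rfl
  set P1 : Matrix (Fin (m + 1)) (Fin (m + 1)) R := Matrix.transvection o L 1 * G2 with hP1def
  set P2 : Matrix (Fin (m + 1)) (Fin (m + 1)) R := Matrix.transvection L o (-δ) * P1 with hP2def
  set G3 : Matrix (Fin (m + 1)) (Fin (m + 1)) R := Matrix.transvection o L (-1) * P2 with hG3def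
  have hG3z : (zi : Matrix (Fin (m + 1)) (Fin (m + 1)) R) * G2 = G3 := by
    rw [hzicoe, hG3def, hP2def, hP1def, mul_assoc, mul_assoc]
  have hP1o : ∀ k, P1 o k = G2 o k + G2 L k := by
    intro k; rw [hP1def, Matrix.transvection_mul_apply_same, one_mul]
  have hP1ne : ∀ i, i ≠ o → ∀ k, P1 i k = G2 i k := by
    intro i hi k; rw [hP1def, Matrix.transvection_mul_apply_of_ne o L i k hi]
  have hP2L : ∀ k, P2 L k = G2 L k - δ * (G2 o k + G2 L k) := by
    intro k
    rw [hP2def, Matrix.transvection_mul_apply_same, hP1o k, hP1ne L hLo k]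
    ring
  have hP2ne : ∀ i, i ≠ L → ∀ k, P2 i k = P1 i k := by
    intro i hi k; rw [hP2def, Matrix.transvection_mul_apply_of_ne L o i k hi]
  have hG3o : ∀ k, G3 o k = G2 o k + δ * (G2 o k + G2 L k) := by
    intro k
    rw [hG3def, Matrix.transvection_mul_apply_same, hP2L k, hP2ne o hoL k, hP1o k]
    ring
  have hG3L : ∀ k, G3 L k = G2 L k - δ * (G2 o k + G2 L k) := by
    intro k
    rw [hG3def, Matrix.transvection_mul_apply_of_ne o L L k hLo, hP2L k]
  have hG3ne : ∀ i, i ≠ o → i ≠ L → ∀ k, G3 i k = G2 i k := by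
    intro i hio hiL k
    rw [hG3def, Matrix.transvection_mul_apply_of_ne o L i k hio, hP2ne i hiL k,
      hP1ne i hio k]
  have hz0cs : (z0.castSucc : Fin (m + 1)) = o := by
    apply Fin.ext; rw [hoval]; simp [hz0]
  have hG2oo : G2 o o = a' z0 := by rw [← hz0cs]; exact hG2c z0
  have hG3oo : G3 o o = 1 := by
    rw [hG3o o, hG2oo, hG2L, hδdef]; ring
  have hG3Lo : G3 L o = 0 := by
    rw [hG3L o, hG2oo, hG2L, hδdef]; ring
  have hG3I : ∀ i k, G3 i k - (1 : Matrix (Fin (m + 1)) (Fin (m + 1)) R) i k ∈ I := by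
    intro i k
    by_cases hio : i = o
    · have e : G3 i k - (1 : Matrix (Fin (m + 1)) (Fin (m + 1)) R) i k
          = (G2 i k - (1 : Matrix (Fin (m + 1)) (Fin (m + 1)) R) i k)
            + δ * (G2 o k + G2 L k) := by
        rw [hio, hG3o k]; ring
      rw [e]
      exact I.add_mem (hG2I i k) (I.mul_mem_right _ hδ)
    · by_cases hiL : i = L
      · have e : G3 i k - (1 : Matrix (Fin (m + 1)) (Fin (m + 1)) R) i k
            = (G2 i k - (1 : Matrix (Fin (m + 1)) (Fin (m + 1)) R) i k)
              - δ * (G2 o k + G2 L k) := by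
          rw [hiL, hG3L k]; ring
        rw [e]
        exact I.sub_mem (hG2I i k) (I.mul_mem_right _ hδ)
      · rw [hG3ne i hio hiL k]
        exact hG2I i k
  -- step 3 : clear the first column below the (0,0) entry
  set φ3 : Fin (m + 1) → R := fun j => if j = o ∨ j = L then 0 else -(G3 j o) with hφ3def
  have hφ3I : ∀ j, φ3 j ∈ I := by
    intro j
    simp only [hφ3def]
    split
    · exact I.zero_mem
    · rename_i hj
      push_neg at hj
      have h1 := hG3I j o
      rw [Matrix.one_apply_ne hj.1, sub_zero] at h1
      exact I.neg_mem h1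
  have hφ3o : φ3 o = 0 := by simp only [hφ3def]; simp
  have hφ3L : φ3 L = 0 := by simp only [hφ3def]; simp
  have hφ3res : ∀ x : Fin (m + 1), x ∉ lmidList m → φ3 x = 0 := by
    intro x hx
    rw [lmidList_mem m x] at hx
    push_neg at hx
    simp only [hφ3def]
    have hor : x = o ∨ x = L := by
      by_cases h0 : (x : ℕ) = 0
      · exact Or.inl (Fin.ext (by omega))
      · have hxm := hx h0
        exact Or.inr (Fin.ext (by omega))
    rw [if_pos hor]
  have hlmidne : ∀ j ∈ lmidList m, j ≠ o := by
    intro j hj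
    rw [lmidList_mem m j] at hj
    intro e; rw [e, hoval] at hj; exact hj.1 rfl
  set B1 : Matrix.SpecialLinearGroup (Fin (m + 1)) R := (BKaux.colList o φ3 (lmidList m)).prod
    with hB1def
  have hB1coe : (B1 : Matrix (Fin (m + 1)) (Fin (m + 1)) R) = 1 + BKaux.Ecol o φ3 := by
    rw [hB1def, BKaux.colList_prod o φ3 (lmidList m) (lmidList_nodup m) hlmidne,
      BKaux.restrict_eq _ _ hφ3res]
  set G4 : Matrix (Fin (m + 1)) (Fin (m + 1)) R := (1 + BKaux.Ecol o φ3) * G3 with hG4def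
  have hG4 : ∀ i k, G4 i k = G3 i k + φ3 i * G3 o k := by
    intro i k; rw [hG4def]; exact BKaux.Ecol_mul_apply o φ3 G3 i k
  have hG4oo : G4 o o = 1 := by rw [hG4 o o, hφ3o, hG3oo]; ring
  have hG4no : ∀ i, i ≠ o → G4 i o = 0 := by
    intro i hio
    by_cases hiL : i = L
    · rw [hG4 i o, hiL, hφ3L, hG3Lo]; ring
    · rw [hG4 i o]
      simp only [hφ3def]
      rw [if_neg (not_or.mpr ⟨hio, hiL⟩), hG3oo]
      ring
  have hG4I : ∀ i k, G4 i k - (1 : Matrix (Fin (m + 1)) (Fin (m + 1)) R) i k ∈ I := by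
    intro i k
    have e : G4 i k - (1 : Matrix (Fin (m + 1)) (Fin (m + 1)) R) i k
        = (G3 i k - (1 : Matrix (Fin (m + 1)) (Fin (m + 1)) R) i k) + φ3 i * G3 o k := by
      rw [hG4 i k]; ring
    rw [e]
    exact I.add_mem (hG3I i k) (I.mul_mem_right _ (hφ3I i))
  -- the matrix so far is an SL element
  set P : Matrix.SpecialLinearGroup (Fin (m + 1)) R := B1 * (zi * (A2 * (A1 * g))) with hPdef
  have hPcoe : (P : Matrix (Fin (m + 1)) (Fin (m + 1)) R) = G4 := by
    rw [hPdef, Matrix.SpecialLinearGroup.coe_mul B1 (zi * (A2 * (A1 * g))),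
      Matrix.SpecialLinearGroup.coe_mul zi (A2 * (A1 * g)),
      Matrix.SpecialLinearGroup.coe_mul A2 (A1 * g),
      Matrix.SpecialLinearGroup.coe_mul A1 g,
      hA1coe, hA2coe, hB1coe, ← hGdef, ← hG1def, ← hG2def, hG3z, ← hG4def]
  set W : Matrix (Fin (m + 1)) (Fin (m + 1)) R :=
    ((P⁻¹ : Matrix.SpecialLinearGroup (Fin (m + 1)) R) :
      Matrix (Fin (m + 1)) (Fin (m + 1)) R) with hWdef
  have hWP : W * G4 = 1 := by
    rw [hWdef, ← hPcoe, ← Matrix.SpecialLinearGroup.coe_mul, inv_mul_cancel,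
      Matrix.SpecialLinearGroup.coe_one]
  -- step 4 : clear the first row
  set u : Fin (m + 1) → R := fun k => (if k = o then (1 : R) else 0) - G4 o k with hudef
  have huI : ∀ k, u k ∈ I := by
    intro k
    have h1 : (if k = o then (1 : R) else 0) = (1 : Matrix (Fin (m + 1)) (Fin (m + 1)) R) o k := by
      rw [Matrix.one_apply]
      by_cases hk : k = o
      · rw [if_pos hk, if_pos hk.symm]
      · rw [if_neg hk, if_neg (fun e => hk e.symm)]
    have e : u k = -(G4 o k - (1 : Matrix (Fin (m + 1)) (Fin (m + 1)) R) o k) := by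
      simp only [hudef]; rw [h1]; ring
    rw [e]
    exact I.neg_mem (hG4I o k)
  set φ4 : Fin (m + 1) → R := fun j => ∑ t, u t * W t j with hφ4def
  have hφ4I : ∀ j, φ4 j ∈ I := by
    intro j
    simp only [hφ4def]
    exact Ideal.sum_mem _ fun t _ => I.mul_mem_right _ (huI t)
  have hWo : ∀ t, W t o = if t = o then 1 else 0 := by
    intro t
    have h2 := congrFun (congrFun hWP t) o
    rw [Matrix.mul_apply] at h2
    have h3 : ∑ j, W t j * G4 j o = W t o := by
      rw [Finset.sum_eq_single_of_mem o (Finset.mem_univ o)]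
      · rw [hG4oo, mul_one]
      · intro j _ hj
        rw [hG4no j hj, mul_zero]
    rw [h3] at h2
    rw [h2, Matrix.one_apply]
  have hφ4o : φ4 o = 0 := by
    simp only [hφ4def]
    have h1 : ∀ t, u t * W t o = if t = o then u t else 0 := by
      intro t
      rw [hWo t]
      by_cases ht : t = o
      · rw [if_pos ht, if_pos ht, mul_one]
      · rw [if_neg ht, if_neg ht, mul_zero]
    calc ∑ t, u t * W t o = ∑ t, if t = o then u t else 0 :=
          Finset.sum_congr rfl fun t _ => h1 t
      _ = u o := by rw [Finset.sum_ite_eq' Finset.univ o u, if_pos (Finset.mem_univ o)]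
      _ = 0 := by simp only [hudef]; simp [hG4oo]
  have hsum4 : ∀ k, ∑ j, φ4 j * G4 j k = u k := by
    intro k
    have h1 : ∑ j, φ4 j * G4 j k = ∑ j, ∑ t, u t * W t j * G4 j k := by
      apply Finset.sum_congr rfl
      intro j _
      simp only [hφ4def]
      rw [Finset.sum_mul]
    rw [h1, Finset.sum_comm]
    have h2 : ∀ t, ∑ j, u t * W t j * G4 j k = u t * (1 : Matrix (Fin (m + 1)) (Fin (m + 1)) R) t k := by
      intro t
      rw [← hWP, Matrix.mul_apply, Finset.mul_sum]
      apply Finset.sum_congr rfl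
      intro j _
      ring
    rw [Finset.sum_congr rfl fun t _ => h2 t]
    have h3 : ∀ t, u t * (1 : Matrix (Fin (m + 1)) (Fin (m + 1)) R) t k
        = if t = k then u t else 0 := by
      intro t
      rw [Matrix.one_apply]
      by_cases ht : t = k
      · rw [if_pos ht, if_pos ht, mul_one]
      · rw [if_neg ht, if_neg ht, mul_zero]
    rw [Finset.sum_congr rfl fun t _ => h3 t, Finset.sum_ite_eq' Finset.univ k u,
      if_pos (Finset.mem_univ k)]
  have hφ4res : ∀ x : Fin (m + 1), x ∉ lposList m → φ4 x = 0 := by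
    intro x hx
    rw [lposList_mem m x] at hx
    push_neg at hx
    have : x = o := Fin.ext (by rw [hoval, hx])
    rw [this]
    exact hφ4o
  have hlposne : ∀ j ∈ lposList m, j ≠ o := by
    intro j hj
    rw [lposList_mem m j] at hj
    intro e; rw [e, hoval] at hj; exact hj rfl
  obtain ⟨B2, hB2def⟩ : ∃ B2 : Matrix.SpecialLinearGroup (Fin (m + 1)) R,
      B2 = (BKaux.rowList o φ4 (lposList m)).prod := ⟨_, rfl⟩
  have hB2coe : (B2 : Matrix (Fin (m + 1)) (Fin (m + 1)) R) = 1 + BKaux.Erow o φ4 := by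
    rw [hB2def, BKaux.rowList_prod o φ4 (lposList m) (lposList_nodup m) hlposne,
      BKaux.restrict_eq _ _ hφ4res]
  obtain ⟨G5, hG5def⟩ : ∃ G5 : Matrix (Fin (m + 1)) (Fin (m + 1)) R,
      G5 = (1 + BKaux.Erow o φ4) * G4 := ⟨_, rfl⟩
  have hG5 : ∀ i k, G5 i k = G4 i k + (if i = o then ∑ j, φ4 j * G4 j k else 0) := by
    intro i k; rw [hG5def]; exact BKaux.Erow_mul_apply o φ4 G4 i k
  have hG5row : ∀ k, G5 o k = (1 : Matrix (Fin (m + 1)) (Fin (m + 1)) R) o k := by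
    intro k
    rw [hG5 o k, if_pos rfl, hsum4 k]
    simp only [hudef]
    rw [Matrix.one_apply]
    by_cases hk : k = o
    · rw [if_pos hk, if_pos hk.symm]; ring
    · rw [if_neg hk, if_neg (fun e => hk e.symm)]; ring
  have hG5col : ∀ i, G5 i o = (1 : Matrix (Fin (m + 1)) (Fin (m + 1)) R) i o := by
    intro i
    by_cases hio : i = o
    · rw [hio]; exact hG5row o
    · rw [hG5 i o, if_neg hio, add_zero, hG4no i hio, Matrix.one_apply_ne hio]
  have hG5I : ∀ i k, G5 i k - (1 : Matrix (Fin (m + 1)) (Fin (m + 1)) R) i k ∈ I := by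
    intro i k
    have e : G5 i k - (1 : Matrix (Fin (m + 1)) (Fin (m + 1)) R) i k
        = (G4 i k - (1 : Matrix (Fin (m + 1)) (Fin (m + 1)) R) i k)
          + (if i = o then ∑ j, φ4 j * G4 j k else 0) := by
      rw [hG5 i k]; ring
    rw [e]
    refine I.add_mem (hG4I i k) ?_
    split
    · exact Ideal.sum_mem _ fun j _ => I.mul_mem_right _ (hφ4I j)
    · exact I.zero_mem
  -- the residual element h
  obtain ⟨h, hhdef⟩ : ∃ h : Matrix.SpecialLinearGroup (Fin (m + 1)) R, h = B2 * P := ⟨_, rfl⟩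
  have hhcoe : (h : Matrix (Fin (m + 1)) (Fin (m + 1)) R) = G5 := by
    rw [hhdef, Matrix.SpecialLinearGroup.coe_mul, hB2coe, hPcoe, ← hG5def]
  -- inverses of the four blocks
  have hA1inv : A1⁻¹ = (BKaux.colList L (-φ1) (lmList m)).prod := by
    apply inv_eq_of_mul_eq_one_right
    apply Subtype.ext
    rw [Matrix.SpecialLinearGroup.coe_mul, hA1coe,
      BKaux.colList_prod L (-φ1) (lmList m) (lmList_nodup m) hlmne,
      BKaux.restrict_eq _ _ (fun x hx => by rw [Pi.neg_apply, hφ1res x hx, neg_zero]),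
      BKaux.one_add_Ecol_mul L φ1 hφ1L, Matrix.SpecialLinearGroup.coe_one]
  have hA2inv : A2⁻¹ = (BKaux.rowList L (-φ2) (lmList m)).prod := by
    apply inv_eq_of_mul_eq_one_right
    apply Subtype.ext
    rw [Matrix.SpecialLinearGroup.coe_mul, hA2coe,
      BKaux.rowList_prod L (-φ2) (lmList m) (lmList_nodup m) hlmne,
      BKaux.restrict_eq _ _ (fun x hx => by rw [Pi.neg_apply, hφ2res x hx, neg_zero]),
      BKaux.one_add_Erow_mul L φ2 hφ2L, Matrix.SpecialLinearGroup.coe_one]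
  have hB1inv : B1⁻¹ = (BKaux.colList o (-φ3) (lmidList m)).prod := by
    apply inv_eq_of_mul_eq_one_right
    apply Subtype.ext
    rw [Matrix.SpecialLinearGroup.coe_mul, hB1coe,
      BKaux.colList_prod o (-φ3) (lmidList m) (lmidList_nodup m) hlmidne,
      BKaux.restrict_eq _ _ (fun x hx => by rw [Pi.neg_apply, hφ3res x hx, neg_zero]),
      BKaux.one_add_Ecol_mul o φ3 hφ3o, Matrix.SpecialLinearGroup.coe_one]
  have hB2inv : B2⁻¹ = (BKaux.rowList o (-φ4) (lposList m)).prod := by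
    apply inv_eq_of_mul_eq_one_right
    apply Subtype.ext
    rw [Matrix.SpecialLinearGroup.coe_mul, hB2coe,
      BKaux.rowList_prod o (-φ4) (lposList m) (lposList_nodup m) hlposne,
      BKaux.restrict_eq _ _ (fun x hx => by rw [Pi.neg_apply, hφ4res x hx, neg_zero]),
      BKaux.one_add_Erow_mul o φ4 hφ4o, Matrix.SpecialLinearGroup.coe_one]
  -- assemble
  refine ⟨BKaux.colList L (-φ1) (lmList m) ++ BKaux.rowList L (-φ2) (lmList m),
    BKaux.colList o (-φ3) (lmidList m) ++ BKaux.rowList o (-φ4) (lposList m),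
    z, h, δ, hδ, ?_, ?_, ?_, ?_, ?_, ?_, ?_, ?_, ?_⟩
  · rw [List.length_append]
    have h1 := BKaux.colList_length L (-φ1) (lmList m)
    have h2 := BKaux.rowList_length L (-φ2) (lmList m)
    rw [lmList_length] at h1 h2
    omega
  · intro x hx
    rcases List.mem_append.1 hx with hx | hx
    · exact BKaux.colList_mem I L (-φ1) (lmList m)
        (fun j _ => I.neg_mem (hφ1I j)) x hx
    · exact BKaux.rowList_mem I L (-φ2) (lmList m)
        (fun j _ => I.neg_mem (hφ2I j)) x hx
  · rw [List.length_append]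
    have h1 := BKaux.colList_length o (-φ3) (lmidList m)
    have h2 := BKaux.rowList_length o (-φ4) (lposList m)
    rw [lmidList_length] at h1
    rw [lposList_length] at h2
    omega
  · intro x hx
    rcases List.mem_append.1 hx with hx | hx
    · exact BKaux.colList_mem I o (-φ3) (lmidList m)
        (fun j _ => I.neg_mem (hφ3I j)) x hx
    · exact BKaux.rowList_mem I o (-φ4) (lposList m)
        (fun j _ => I.neg_mem (hφ4I j)) x hx
  · exact hzdef
  · intro i k
    rw [hhcoe]
    exact hG5I i k
  · intro j
    rw [hhcoe]
    exact hG5row j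
  · intro i
    rw [hhcoe]
    exact hG5col i
  · rw [List.prod_append, ← hA1inv, ← hA2inv, List.prod_append, ← hB1inv, ← hB2inv,
      hhdef, hPdef, ← hziz]
    simp only [mul_assoc, inv_mul_cancel_left, mul_inv_cancel_left]
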